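/- Let G = (V, E) be a finite simple graph and let E = E1 ∪ E2 be a partition of its edge set such that the spanning subgraph (V, E2) is bipartite. Then the graph G' obtained from G by subdividing each edge of E1 twice is triangle-free, i.e., G' contains no three mutually adjacent vertices. -/

import Mathlib

open SimpleGraph Finset

/-- The type of new vertices added when each edge of `E1` is subdivided twice:
for an edge `e = {u, v} ∈ E1`, the ordered pair `(u, v)` represents the new vertex
`v'_{e,u}` (the one adjacent to `u`), and `(v, u)` represents `v'_{e,v}`. -/
abbrev NewVert (V : Type*) (E1 : Finset (Sym2 V)) : Type _ :=
  {p : V × V // s(p.1, p.2) ∈ E1 ∧ p.1 ≠ p.2}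

/-- The graph `G'` obtained from `G` by subdividing each edge of `E1` twice:
an edge `e = {u, v} ∈ E1` is replaced by the path `u — v'_{e,u} — v'_{e,v} — v`,
and edges not in `E1` are kept unchanged. -/
def subdivide {V : Type*} (G : SimpleGraph V) (E1 : Finset (Sym2 V)) :
    SimpleGraph (V ⊕ NewVert V E1) where
  Adj x y :=
    match x, y with
    | Sum.inl u, Sum.inl w => G.Adj u w ∧ s(u, w) ∉ E1
    | Sum.inl u, Sum.inr p => u = p.val.1
    | Sum.inr p, Sum.inl u => u = p.val.1
    | Sum.inr p, Sum.inr q => p.val.1 = q.val.2 ∧ p.val.2 = q.val.1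
  symm := by
    constructor
    rintro (u | p) (w | q) h
    · exact ⟨h.1.symm, fun hc => h.2 (by rwa [Sym2.eq_swap] at hc)⟩
    · exact h
    · exact h
    · exact ⟨h.2.symm, h.1.symm⟩
  loopless := by
    constructor
    rintro (u | p) h
    · exact G.irrefl h.1
    · exact p.prop.2 h.1

/-- If the edge set of a finite simple graph `G` is partitioned into
`E1 ∪ E2` such that the spanning subgraph `(V, E2)` is bipartite, then the graph `G'`
obtained from `G` by subdividing each edge of `E1` twice is triangle-free. -/
theorem statement1 {V : Type*} [Fintype V] [DecidableEq V] (G : SimpleGraph V)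
    [DecidableRel G.Adj] (E1 E2 : Finset (Sym2 V))
    (hdisj : Disjoint E1 E2) (hunion : E1 ∪ E2 = G.edgeFinset)
    (hbip : ∃ c : V → Bool, ∀ u v : V, s(u, v) ∈ E2 → c u ≠ c v) :
    (subdivide G E1).CliqueFree 3 := by
  obtain ⟨c, hc⟩ := hbip
  intro t ht
  rw [is3Clique_iff] at ht
  obtain ⟨a, b, d, hab, had, hbd, -⟩ := ht
  have key : ∀ u w, (subdivide G E1).Adj (Sum.inl u) (Sum.inl w) → c u ≠ c w := by
    intro u w h
    apply hc
    have hm : s(u, w) ∈ E1 ∪ E2 := by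
      rw [hunion]; exact mem_edgeFinset.mpr h.1
    rcases Finset.mem_union.mp hm with h1 | h2
    · exact absurd h1 h.2
    · exact h2
  rcases a with u | p <;> rcases b with w | q <;> rcases d with x | r
  · have h1 := key _ _ hab; have h2 := key _ _ had; have h3 := key _ _ hbd
    cases hu : c u <;> cases hw : c w <;> cases hx : c x <;> simp_all
  · have h1 : u = r.val.1 := had
    have h2 : w = r.val.1 := hbd
    exact G.irrefl (by rw [h1, ← h2] at hab; exact hab.1)
  · have h1 : u = q.val.1 := hab
    have h2 : x = q.val.1 := hbd
    exact G.irrefl (by rw [h1, ← h2] at had; exact had.1)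
  · have h1 : u = q.val.1 := hab
    have h2 : u = r.val.1 := had
    have h3 : q.val.1 = r.val.2 ∧ q.val.2 = r.val.1 := hbd
    exact r.prop.2 (by rw [← h2, h1, h3.1])
  · have h1 : w = p.val.1 := hab
    have h2 : x = p.val.1 := had
    exact G.irrefl (by rw [h1, ← h2] at hbd; exact hbd.1)
  · have h1 : w = p.val.1 := hab
    have h2 : w = r.val.1 := hbd
    have h3 : p.val.1 = r.val.2 ∧ p.val.2 = r.val.1 := had
    exact r.prop.2 (by rw [← h2, h1, h3.1])
  · have h1 : x = p.val.1 := had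
    have h2 : x = q.val.1 := hbd
    have h3 : p.val.1 = q.val.2 ∧ p.val.2 = q.val.1 := hab
    exact q.prop.2 (by rw [← h2, h1, h3.1])
  · have h1 : p.val.1 = q.val.2 ∧ p.val.2 = q.val.1 := hab
    have h2 : p.val.1 = r.val.2 ∧ p.val.2 = r.val.1 := had
    have h3 : q.val.1 = r.val.2 ∧ q.val.2 = r.val.1 := hbd
    exact p.prop.2 (by rw [h1.1, h3.2, ← h2.2])
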